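/- Let r be an admissible regularizer on the closed unit ball B = {w ∈ ℝ² : ‖w‖ ≤ 1}. Then there exist two points w₁, w₂ ∈ B and a real number δ with −0.005‖w₁‖ < δ < 0.005‖w₁‖ such that w₂ = w₁ + δ·w₁⊥ and r(w₁) ≠ r(w₂), where for w = (a, b) the vector w⊥ denotes (b, −a). -/

import Mathlib

/- STATEMENT 19: an admissible regularizer on the unit ball of ℝ² takes different
   values at two points `w₁` and `w₂ = w₁ + δ·w₁⊥` with `|δ| < 0.005‖w₁‖`. -/

open MeasureTheory Metric

noncomputable section

abbrev Euc (d : ℕ) := EuclideanSpace ℝ (Fin d)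

/-- The point `(x, y) ∈ ℝ²`. -/
def toE2 (x y : ℝ) : Euc 2 := (WithLp.equiv 2 (Fin 2 → ℝ)).symm ![x, y]

/-- For `w = (a, b)`, `perp w = (b, −a)`. -/
def perp (w : Euc 2) : Euc 2 := toE2 (w 1) (-(w 0))

/-- An admissible regularizer on `W`: nonnegative with minimum value `0`,
non-constant on `W \ {0}`, and upper semi-continuous in the sense that every point
penalized by `r` is also penalized under small perturbations. -/
def AdmissibleOn (W : Set (Euc 2)) (r : Euc 2 → ℝ) : Prop :=
  (∀ w ∈ W, 0 ≤ r w) ∧ (∃ w ∈ W, r w = 0) ∧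
  (¬ ∃ a : ℝ, ∀ w ∈ W, w ≠ 0 → r w = a) ∧
  (∀ w ∈ W, ∀ ε₀ > (0 : ℝ), ∃ δ₀ > (0 : ℝ), ∀ u ∈ W, ‖u - w‖ < δ₀ → r w - ε₀ < r u)

namespace Stmt19Aux

open Complex

def Complex.abs : AbsoluteValue ℂ ℝ := IsAbsoluteValue.toAbsoluteValue (norm : ℂ → ℝ)

@[simp] lemma Complex.abs_eq_norm' (z : ℂ) : Complex.abs z = ‖z‖ := rfl

lemma Complex.abs_apply (z : ℂ) : Complex.abs z = Real.sqrt (Complex.normSq z) :=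
  Complex.norm_def z

lemma Complex.abs_ofReal (x : ℝ) : Complex.abs (x : ℂ) = |x| := by
  simp

lemma Complex.abs_exp_ofReal_mul_I (x : ℝ) : Complex.abs (Complex.exp (x * I)) = 1 :=
  Complex.norm_exp_ofReal_mul_I x

lemma Complex.abs_mul_exp_arg_mul_I (x : ℂ) :
    ((Complex.abs x : ℝ) : ℂ) * Complex.exp (x.arg * I) = x :=
  Complex.norm_mul_exp_arg_mul_I x

lemma abs_one_sub_mul_I (δ : ℝ) : Complex.abs (1 - δ*I) = Real.sqrt (1 + δ^2) := by
  rw [Complex.abs_apply, Complex.normSq_apply]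
  simp
  ring_nf

lemma abs_one_add_mul_I (δ : ℝ) : Complex.abs (1 + δ*I) = Real.sqrt (1 + δ^2) := by
  rw [Complex.abs_apply, Complex.normSq_apply]
  simp
  ring_nf

lemma one_add_ne (δ : ℝ) : (1 + (δ:ℂ)*I) ≠ 0 := by
  intro h
  have := congrArg Complex.re h
  simp at this

lemma one_sub_ne (δ : ℝ) : (1 - (δ:ℂ)*I) ≠ 0 := by
  intro h
  have := congrArg Complex.re h
  simp at this

lemma exp_arctan (δ : ℝ) :
    Complex.exp ((Real.arctan δ : ℝ) * I) = (1 + δ*I) / (Real.sqrt (1 + δ^2) : ℝ) := by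
  rw [Complex.exp_mul_I]
  rw [show (Complex.cos (Real.arctan δ)) = ((Real.cos (Real.arctan δ) : ℝ) : ℂ) by
        rw [Complex.ofReal_cos],
      show (Complex.sin (Real.arctan δ)) = ((Real.sin (Real.arctan δ) : ℝ) : ℂ) by
        rw [Complex.ofReal_sin]]
  rw [Real.cos_arctan, Real.sin_arctan]
  push_cast
  field_simp

lemma rot_eq (δ : ℝ) :
    Complex.exp ((2 * Real.arctan δ : ℝ) * I) = (1 + δ*I) / (1 - δ*I) := by
  have hs : ((Real.sqrt (1 + δ^2) : ℝ) : ℂ) ≠ 0 := by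
    simp; positivity
  have h : ((2 * Real.arctan δ : ℝ) : ℂ) * I
      = (Real.arctan δ : ℝ) * I + (Real.arctan δ : ℝ) * I := by
    push_cast; ring
  rw [h, Complex.exp_add, exp_arctan]
  have key : (1 - (δ:ℂ)*I) * (1 + δ*I) = ((Real.sqrt (1 + δ^2) : ℝ):ℂ)^2 := by
    have h2 : ((Real.sqrt (1 + δ^2) : ℝ):ℂ)^2 = ((1 + δ^2 : ℝ) : ℂ) := by
      rw [← Complex.ofReal_pow, Real.sq_sqrt (by positivity)]
    rw [h2]; push_cast
    have hI : ((δ:ℂ)*I)*((δ:ℂ)*I) = -(δ^2) := by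
      rw [show ((δ:ℂ)*I)*((δ:ℂ)*I) = (δ:ℂ)^2 * I^2 by ring, Complex.I_sq]; ring
    linear_combination -hI
  field_simp [one_sub_ne δ]
  linear_combination (1 + (δ:ℂ)*I) * key

lemma tan_abs_le {x c : ℝ} (hc : 0 < c) (h : |x| ≤ Real.arctan c) : |Real.tan x| ≤ c := by
  have hap : 0 < Real.arctan c := by
    rw [← Real.arctan_zero]; exact Real.arctan_strictMono hc
  have hb : Real.arctan c < Real.pi / 2 := Real.arctan_lt_pi_div_two c
  have hpi : (0:ℝ) < Real.pi / 2 := by positivity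
  have hpi0 : (0:ℝ) < Real.pi / 2 := by positivity
  have hmem1 : |x| ∈ Set.Ioo (-(Real.pi/2)) (Real.pi/2) :=
    ⟨by linarith [abs_nonneg x], lt_of_le_of_lt h hb⟩
  have hmem2 : Real.arctan c ∈ Set.Ioo (-(Real.pi/2)) (Real.pi/2) :=
    ⟨by linarith, hb⟩
  have hmem0 : (0:ℝ) ∈ Set.Ioo (-(Real.pi/2)) (Real.pi/2) := ⟨by linarith, hpi⟩
  have h1 : Real.tan |x| ≤ Real.tan (Real.arctan c) :=
    Real.strictMonoOn_tan.monotoneOn hmem1 hmem2 h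
  have h0 : Real.tan 0 ≤ Real.tan |x| :=
    Real.strictMonoOn_tan.monotoneOn hmem0 hmem1 (abs_nonneg x)
  rw [Real.tan_zero] at h0
  rw [Real.tan_arctan] at h1
  rcases le_or_gt 0 x with hx | hx
  · rw [_root_.abs_of_nonneg hx] at h1 h0
    rw [_root_.abs_of_nonneg h0]
    exact h1
  · rw [_root_.abs_of_neg hx] at h1 h0
    rw [Real.tan_neg] at h1 h0
    rw [_root_.abs_of_nonpos (by linarith)]
    linarith

section Moves

variable {R : ℂ → ℝ}

def Hyp (R : ℂ → ℝ) : Prop :=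
  ∀ (z : ℂ) (δ : ℝ), Complex.abs z ≤ 1 → Complex.abs ((1 - δ*I)*z) ≤ 1 →
    |δ| < 0.005 * Complex.abs z → R ((1 - δ*I)*z) = R z

lemma small_rot (H : Hyp R) {z : ℂ} (hz0 : z ≠ 0) (hz : Complex.abs z ≤ 1)
    {δ : ℝ} (hδ : |δ| ≤ 0.004 * Complex.abs z) :
    R ((1 - δ*I) / (1 + δ*I) * z) = R z := by
  have hzpos : 0 < Complex.abs z := by
    simpa using (Complex.abs.pos hz0)
  set z₁ := z / (1 + δ*I) with hz₁
  have hsq : (1:ℝ) ≤ Real.sqrt (1 + δ^2) := by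
    nlinarith [Real.sq_sqrt (show (0:ℝ) ≤ 1 + δ^2 by positivity),
      Real.sqrt_nonneg (1 + δ^2), sq_nonneg δ]
  have habs1 : Complex.abs z₁ = Complex.abs z / Real.sqrt (1 + δ^2) := by
    rw [hz₁, map_div₀, abs_one_add_mul_I]
  have hsqpos : 0 < Real.sqrt (1 + δ^2) := by positivity
  have hz₁le : Complex.abs z₁ ≤ 1 := by
    rw [habs1]
    rw [div_le_one hsqpos]
    linarith
  have hδ4 : |δ| ≤ 0.004 := by
    calc |δ| ≤ 0.004 * Complex.abs z := hδ
    _ ≤ 0.004 * 1 := by nlinarith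
    _ = 0.004 := by norm_num
  have hδsq : δ^2 ≤ 0.004^2 := by
    rw [← _root_.sq_abs]
    exact pow_le_pow_left₀ (abs_nonneg δ) hδ4 2
  have hsqlt : Real.sqrt (1 + δ^2) < 1.25 := by
    nlinarith [Real.sq_sqrt (show (0:ℝ) ≤ 1 + δ^2 by positivity),
      Real.sqrt_nonneg (1 + δ^2)]
  have hδ' : |δ| < 0.005 * Complex.abs z₁ := by
    rw [habs1, ← mul_div_assoc, lt_div_iff₀ hsqpos]
    have h1 : |δ| * Real.sqrt (1 + δ^2) ≤ 0.004 * Complex.abs z * Real.sqrt (1 + δ^2) :=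
      mul_le_mul_of_nonneg_right hδ (le_of_lt hsqpos)
    nlinarith
  -- step A : R z = R z₁
  have hAz : (1 - (((-δ:ℝ)):ℂ)*I) * z₁ = z := by
    push_cast
    rw [hz₁]
    field_simp [one_add_ne δ]
    ring
  have hA : R z = R z₁ := by
    have := H z₁ (-δ) hz₁le (by rw [hAz]; exact hz)
      (by rw [_root_.abs_neg]; exact hδ')
    rwa [hAz] at this
  -- step B : R ((1-δI) z₁) = R z₁
  have hB : R ((1 - δ*I) * z₁) = R z₁ := by
    apply H z₁ δ hz₁le
    · rw [map_mul, abs_one_sub_mul_I, habs1, mul_comm,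
        div_mul_cancel₀ _ (ne_of_gt hsqpos)]
      exact hz
    · exact hδ'
  have hform : (1 - (δ:ℂ)*I) * z₁ = (1 - δ*I) / (1 + δ*I) * z := by
    rw [hz₁]
    field_simp
  rw [hform] at hB
  rw [hB, ← hA]

lemma angle_rot (H : Hyp R) {z : ℂ} (hz0 : z ≠ 0) (hz : Complex.abs z ≤ 1)
    {y : ℝ} (hy : |y| ≤ Real.arctan (0.004 * Complex.abs z)) :
    R (Complex.exp ((2*y : ℝ) * I) * z) = R z := by
  have hzpos : 0 < Complex.abs z := by
    simpa using (Complex.abs.pos hz0)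
  have hcpos : 0 < 0.004 * Complex.abs z := by positivity
  set δ : ℝ := -(Real.tan y) with hδdef
  have hδ : |δ| ≤ 0.004 * Complex.abs z := by
    rw [hδdef, abs_neg]
    exact tan_abs_le hcpos hy
  have hsr := small_rot H hz0 hz hδ
  have hrot : Complex.exp ((2*y : ℝ) * I) = (1 - δ*I) / (1 + δ*I) := by
    have hy2 : -(Real.pi/2) < y ∧ y < Real.pi/2 := by
      have hb : Real.arctan (0.004 * Complex.abs z) < Real.pi / 2 :=
        Real.arctan_lt_pi_div_two _
      constructor
      · have := neg_abs_le y
        nlinarith [abs_nonneg y]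
      · nlinarith [le_abs_self y]
    have := rot_eq (Real.tan y)
    rw [Real.arctan_tan hy2.1 hy2.2] at this
    rw [this, hδdef]
    push_cast
    ring_nf
  rw [hrot]
  exact hsr

lemma rot_pow (H : Hyp R) {z : ℂ} (hz0 : z ≠ 0) (hz : Complex.abs z ≤ 1)
    {y : ℝ} (hy : |y| ≤ Real.arctan (0.004 * Complex.abs z)) :
    ∀ n : ℕ, R (Complex.exp ((2*y : ℝ) * I) ^ n * z) = R z := by
  intro n
  induction n with
  | zero => simp
  | succ n ih =>
    have habs : Complex.abs (Complex.exp ((2*y : ℝ) * I) ^ n * z) = Complex.abs z := by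
      rw [map_mul, map_pow, Complex.abs_exp_ofReal_mul_I]
      simp
    have hne : Complex.exp ((2*y : ℝ) * I) ^ n * z ≠ 0 :=
      mul_ne_zero (pow_ne_zero _ (Complex.exp_ne_zero _)) hz0
    have := angle_rot H hne (by rw [habs]; exact hz) (by rw [habs]; exact hy)
    rw [show Complex.exp ((2*y : ℝ) * I) ^ (n+1) * z
        = Complex.exp ((2*y : ℝ) * I) * (Complex.exp ((2*y : ℝ) * I) ^ n * z) by ring]
    rw [this, ih]

lemma full_rot (H : Hyp R) {z : ℂ} (hz0 : z ≠ 0) (hz : Complex.abs z ≤ 1) (θ : ℝ) :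
    R (Complex.exp ((θ : ℝ) * I) * z) = R z := by
  have hzpos : 0 < Complex.abs z := by
    simpa using (Complex.abs.pos hz0)
  set α := Real.arctan (0.004 * Complex.abs z) with hα
  have hαpos : 0 < α := by
    rw [hα, ← Real.arctan_zero]
    exact Real.arctan_strictMono (by positivity)
  obtain ⟨n, hn⟩ := exists_nat_gt (|θ| / (2*α))
  have hn0 : 0 < n := by
    by_contra hc
    push_neg at hc
    interval_cases n
    have : 0 ≤ |θ| / (2*α) := by positivity
    simp at hn
    linarith
  set y : ℝ := θ / (2*n) with hy
  have hny : (0:ℝ) < n := by exact_mod_cast hn0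
  have hyb : |y| ≤ α := by
    rw [hy, abs_div]
    rw [div_le_iff₀ (by positivity)]
    rw [div_lt_iff₀ (by positivity)] at hn
    have : |(2 * (n:ℝ))| = 2*n := by
      rw [abs_of_pos]; positivity
    rw [this]
    nlinarith
  have := rot_pow H hz0 hz hyb n
  rwa [show Complex.exp ((2*y : ℝ) * I) ^ n = Complex.exp ((θ:ℝ) * I) by
    rw [← Complex.exp_nat_mul]
    congr 1
    push_cast [hy]
    have hnne : ((n:ℕ):ℂ) ≠ 0 := Nat.cast_ne_zero.mpr hn0.ne'
    field_simp] at this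

lemma same_abs (H : Hyp R) {z w : ℂ} (hz0 : z ≠ 0) (hw0 : w ≠ 0)
    (habs : Complex.abs z = Complex.abs w) (hz : Complex.abs z ≤ 1) : R z = R w := by
  have hzpos : 0 < Complex.abs z := by
    simpa using (Complex.abs.pos hz0)
  have key : ∀ u : ℂ, u ≠ 0 → Complex.abs u ≤ 1 →
      R u = R ((Complex.abs u : ℝ) : ℂ) := by
    intro u hu0 hu1
    have hupos : 0 < Complex.abs u := by
      simpa using (Complex.abs.pos hu0)
    have hne : ((Complex.abs u : ℝ) : ℂ) ≠ 0 := by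
      simp [ne_of_gt hupos, hu0]
    have habs' : Complex.abs ((Complex.abs u : ℝ) : ℂ) = Complex.abs u := by
      rw [Complex.abs_ofReal, abs_of_pos hupos]
    have := full_rot H hne (by rw [habs']; exact hu1) u.arg
    rw [show Complex.exp ((u.arg : ℝ) * I) * ((Complex.abs u : ℝ) : ℂ) = u by
      rw [mul_comm]; exact Complex.abs_mul_exp_arg_mul_I u] at this
    exact this
  rw [key z hz0 hz, key w hw0 (by rw [← habs]; exact hz), habs]

lemma scale_step (H : Hyp R) {s t : ℝ} (hs : 0 < s) (hst : s ≤ t) (ht1 : t ≤ 1)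
    (hb : t ≤ s * Real.sqrt (1 + (0.004*s)^2)) :
    R ((t : ℝ) : ℂ) = R ((s : ℝ) : ℂ) := by
  have ht : 0 < t := lt_of_lt_of_le hs hst
  set δ : ℝ := Real.sqrt ((t/s)^2 - 1) with hδdef
  have hts1 : 1 ≤ t/s := (one_le_div hs).mpr hst
  have hδ0 : 0 ≤ δ := Real.sqrt_nonneg _
  have hδsq : δ^2 = (t/s)^2 - 1 := Real.sq_sqrt (by nlinarith)
  have hkey : s * Real.sqrt (1 + δ^2) = t := by
    rw [hδsq, show 1 + ((t/s)^2 - 1) = (t/s)^2 by ring, Real.sqrt_sq (by positivity)]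
    field_simp
  have hδb : |δ| < 0.005 * s := by
    have hsq2 : (t/s)^2 ≤ 1 + (0.004*s)^2 := by
      have h1 : t/s ≤ Real.sqrt (1 + (0.004*s)^2) := by
        rw [div_le_iff₀ hs, mul_comm]
        exact hb
      nlinarith [Real.sq_sqrt (show (0:ℝ) ≤ 1 + (0.004*s)^2 by positivity),
        Real.sqrt_nonneg (1 + (0.004*s)^2)]
    have : δ ≤ 0.004 * s := by
      rw [hδdef]
      rw [show (0.004*s : ℝ) = Real.sqrt ((0.004*s)^2) by
        rw [Real.sqrt_sq (by positivity)]]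
      exact Real.sqrt_le_sqrt (by nlinarith)
    rw [_root_.abs_of_nonneg hδ0]
    nlinarith
  have habs_s : Complex.abs ((s:ℝ):ℂ) = s := by
    rw [Complex.abs_ofReal, abs_of_pos hs]
  have habs_move : Complex.abs ((1 - δ*Complex.I) * ((s:ℝ):ℂ)) = t := by
    rw [map_mul, abs_one_sub_mul_I, habs_s, mul_comm]
    exact hkey
  have hH := H ((s:ℝ):ℂ) δ (by rw [habs_s]; linarith) (by rw [habs_move]; exact ht1)
    (by rw [habs_s]; exact hδb)
  have hs2 := same_abs H (z := (1 - δ*Complex.I) * ((s:ℝ):ℂ)) (w := ((t:ℝ):ℂ))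
    (by
      apply mul_ne_zero (one_sub_ne δ)
      simp [ne_of_gt hs])
    (by simp [ne_of_gt ht])
    (by rw [habs_move, Complex.abs_ofReal, abs_of_pos ht])
    (by rw [habs_move]; exact ht1)
  rw [← hs2, hH]

lemma scale_chain (H : Hyp R) {s t : ℝ} (hs : 0 < s) (hst : s ≤ t) (ht1 : t ≤ 1) :
    R ((t : ℝ) : ℂ) = R ((s : ℝ) : ℂ) := by
  set q : ℝ := Real.sqrt (1 + (0.004*s)^2) with hq
  have hq1 : 1 < q := by
    have h1 : q^2 = 1 + (0.004*s)^2 := Real.sq_sqrt (by positivity)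
    nlinarith [Real.sqrt_nonneg (1 + (0.004*s)^2), sq_nonneg (0.004*s), hs]
  have hq0 : 0 < q := by linarith
  obtain ⟨n, hn⟩ := pow_unbounded_of_one_lt (t/s) hq1
  have htn : t ≤ s * q^n := by
    rw [div_lt_iff₀ hs] at hn
    nlinarith
  clear hn
  induction n generalizing t with
  | zero =>
    have : t = s := le_antisymm (by simpa using htn) hst
    rw [this]
  | succ n ih =>
    by_cases hc : t ≤ s * q
    · exact scale_step H hs hst ht1 hc
    · push_neg at hc
      set t' : ℝ := t / q with ht'
      have ht'1 : t' ≤ 1 := by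
        rw [ht', div_le_one hq0]
        nlinarith
      have hst' : s ≤ t' := by
        rw [ht', le_div_iff₀ hq0]
        linarith
      have ht'n : t' ≤ s * q^n := by
        rw [ht', div_le_iff₀ hq0, pow_succ] at *
        nlinarith [pow_pos hq0 n]
      have hih := ih hst' ht'1 ht'n
      have hstep : R ((t : ℝ) : ℂ) = R ((t' : ℝ) : ℂ) := by
        apply scale_step H (lt_of_lt_of_le hs hst') _ ht1
        · have hqle : q ≤ Real.sqrt (1 + (0.004*t')^2) := by
            rw [hq]
            apply Real.sqrt_le_sqrt
            nlinarith
          have : t = t' * q := by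
            rw [ht']; field_simp
          nlinarith [lt_of_lt_of_le hs hst']
        · rw [ht', div_le_iff₀ hq0]
          nlinarith [lt_of_lt_of_le hs hst, hq1]
      rw [hstep, hih]

lemma R_const (H : Hyp R) {z w : ℂ} (hz0 : z ≠ 0) (hw0 : w ≠ 0)
    (hz : Complex.abs z ≤ 1) (hw : Complex.abs w ≤ 1) : R z = R w := by
  have hzpos : 0 < Complex.abs z := by simpa using (Complex.abs.pos hz0)
  have hwpos : 0 < Complex.abs w := by simpa using (Complex.abs.pos hw0)
  have h1 : R z = R ((Complex.abs z : ℝ) : ℂ) :=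
    same_abs H hz0 (by simp [ne_of_gt hzpos, hz0]) (by rw [Complex.abs_ofReal, abs_of_pos hzpos]) hz
  have h2 : R w = R ((Complex.abs w : ℝ) : ℂ) :=
    same_abs H hw0 (by simp [ne_of_gt hwpos, hw0]) (by rw [Complex.abs_ofReal, abs_of_pos hwpos]) hw
  rcases le_total (Complex.abs z) (Complex.abs w) with hle | hle
  · rw [h1, h2, scale_chain H hzpos hle hw]
  · rw [h1, h2, scale_chain H hwpos hle hz]

end Moves

def φ (z : ℂ) : Euc 2 := toE2 z.re z.im

lemma φ_norm (z : ℂ) : ‖φ z‖ = Complex.abs z := by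
  rw [EuclideanSpace.norm_eq, Complex.abs_apply, Complex.normSq_apply]
  rw [Fin.sum_univ_two]
  simp [φ, toE2, sq]

lemma φ_surj (w : Euc 2) : φ (⟨w 0, w 1⟩ : ℂ) = w := by
  ext i
  fin_cases i <;> rfl

lemma φ_perp (z : ℂ) : perp (φ z) = φ (-Complex.I * z) := by
  ext i
  fin_cases i <;> simp [perp, φ, toE2]

lemma φ_add (z w : ℂ) : φ (z + w) = φ z + φ w := by
  ext i
  fin_cases i <;> simp [φ, toE2]

lemma φ_smul (t : ℝ) (z : ℂ) : φ ((t:ℂ) * z) = t • φ z := by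
  ext i
  fin_cases i <;> simp [φ, toE2]

lemma φ_move (z : ℂ) (δ : ℝ) : φ ((1 - δ*Complex.I) * z) = φ z + δ • perp (φ z) := by
  rw [φ_perp, ← φ_smul, ← φ_add]
  ring_nf

lemma φ_zero : φ 0 = 0 := by
  ext i
  fin_cases i <;> simp [φ, toE2]

end Stmt19Aux

open Stmt19Aux in
theorem stmt19 (r : Euc 2 → ℝ) (hr : AdmissibleOn (closedBall 0 1) r) :
    ∃ w₁ ∈ closedBall (0 : Euc 2) 1, ∃ w₂ ∈ closedBall (0 : Euc 2) 1, ∃ δ : ℝ,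
      -0.005 * ‖w₁‖ < δ ∧ δ < 0.005 * ‖w₁‖ ∧
      w₂ = w₁ + δ • perp w₁ ∧ r w₁ ≠ r w₂ := by
  by_contra hcon
  push_neg at hcon
  set R : ℂ → ℝ := fun z => r (φ z) with hR
  have H : Hyp R := by
    intro z δ h1 h2 h3
    have hw1 : φ z ∈ closedBall (0 : Euc 2) 1 := by
      rw [mem_closedBall_zero_iff, φ_norm]; exact h1
    have hw2 : φ ((1 - δ*Complex.I) * z) ∈ closedBall (0 : Euc 2) 1 := by
      rw [mem_closedBall_zero_iff, φ_norm]; exact h2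
    have hb := abs_lt.mp h3
    have := hcon (φ z) hw1 (φ ((1 - δ*Complex.I) * z)) hw2 δ
      (by rw [φ_norm]; linarith [hb.1]) (by rw [φ_norm]; exact hb.2)
      (φ_move z δ)
    exact this.symm
  apply hr.2.2.1
  refine ⟨R 1, fun w hw hw0 => ?_⟩
  set z : ℂ := ⟨w 0, w 1⟩ with hz
  have hφ : φ z = w := φ_surj w
  have hz0 : z ≠ 0 := by
    intro h
    apply hw0
    rw [← hφ, h, φ_zero]
  have hzabs : Complex.abs z ≤ 1 := by
    rw [← φ_norm, hφ]
    exact mem_closedBall_zero_iff.mp hw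
  have hwr : r w = R z := by
    show r w = r (φ z)
    rw [hφ]
  rw [hwr]
  exact R_const H hz0 one_ne_zero hzabs (by simp)

end
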